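/- Let K be a finite subset of the vertex set of a locally finite transient graph G. The equilibrium measure e_K, defined by e_K(x) = d(x) · P_x[random walk never returns to K] for x ∈ K, satisfies e_K(x) = lim_{n→∞} c_{*_n} P_{*_n}[X_τ = x], where *_n is the vertex obtained by contracting the complement of the ball G_n to a single vertex, and τ is the first hitting time of K ∪ {*_n}. -/

import Mathlib

open Filter


section aux
variable {V : Type*} [DecidableEq V] (G : SimpleGraph V) [DecidableRel G.Adj]
  [∀ v : V, Fintype (G.neighborSet v)] (K : Finset V) (o : V)

noncomputable def stepT (n : ℕ) (q : V → ℝ) : V → ℝ := fun z =>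
  if z ∈ K then 1
  else if G.dist o z ≤ n then
    (∑ w ∈ (G.neighborFinset z).filter (fun w => G.dist o w ≤ n), q w) / (G.degree z)
  else 0

noncomputable def phiIter (n k : ℕ) : V → ℝ := (stepT G K o n)^[k] (fun _ => 0)

noncomputable def phi (n : ℕ) (z : V) : ℝ := ⨆ k, phiIter G K o n k z

variable {G K o}

lemma stepT_nonneg {n : ℕ} {q : V → ℝ} (hq : ∀ z, 0 ≤ q z) (z : V) :
    0 ≤ stepT G K o n q z := by
  unfold stepT
  split_ifs
  · norm_num
  · exact div_nonneg (Finset.sum_nonneg fun w _ => hq w) (by positivity)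
  · exact le_refl _

lemma stepT_le_one {n : ℕ} {q : V → ℝ} (hq : ∀ z, q z ≤ 1) (z : V) :
    stepT G K o n q z ≤ 1 := by
  unfold stepT
  split_ifs
  · exact le_refl _
  · apply div_le_one_of_le₀
    · calc ∑ w ∈ (G.neighborFinset z).filter (fun w => G.dist o w ≤ n), q w
          ≤ ∑ w ∈ (G.neighborFinset z).filter (fun w => G.dist o w ≤ n), 1 :=
            Finset.sum_le_sum fun w _ => hq w
        _ = ((G.neighborFinset z).filter (fun w => G.dist o w ≤ n)).card := by simp
        _ ≤ (G.neighborFinset z).card := by exact_mod_cast Finset.card_filter_le _ _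
        _ = (G.degree z : ℝ) := by rw [G.card_neighborFinset_eq_degree]
    · positivity
  · norm_num

lemma stepT_mono {n : ℕ} {q q' : V → ℝ} (h : ∀ z, q z ≤ q' z) (z : V) :
    stepT G K o n q z ≤ stepT G K o n q' z := by
  unfold stepT
  split_ifs
  · exact le_refl _
  · rcases eq_or_lt_of_le (Nat.cast_nonneg (α := ℝ) (G.degree z)) with hd | hd
    · rw [← hd, div_zero, div_zero]
    · exact (div_le_div_iff_of_pos_right hd).mpr (Finset.sum_le_sum fun w _ => h w)
  · exact le_refl _

lemma stepT_mono_n {n : ℕ} {q q' : V → ℝ} (h : ∀ z, q z ≤ q' z) (hq' : ∀ z, 0 ≤ q' z)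
    (z : V) : stepT G K o n q z ≤ stepT G K o (n + 1) q' z := by
  unfold stepT
  by_cases hzK : z ∈ K
  · simp [hzK]
  by_cases hzn : G.dist o z ≤ n
  · rw [if_neg hzK, if_neg hzK, if_pos hzn, if_pos (hzn.trans (Nat.le_succ n))]
    rcases eq_or_lt_of_le (Nat.cast_nonneg (α := ℝ) (G.degree z)) with hd | hd
    · rw [← hd, div_zero, div_zero]
    · refine (div_le_div_iff_of_pos_right hd).mpr ?_
      calc ∑ w ∈ (G.neighborFinset z).filter (fun w => G.dist o w ≤ n), q w
          ≤ ∑ w ∈ (G.neighborFinset z).filter (fun w => G.dist o w ≤ n), q' w :=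
            Finset.sum_le_sum fun w _ => h w
        _ ≤ ∑ w ∈ (G.neighborFinset z).filter (fun w => G.dist o w ≤ n + 1), q' w := by
            apply Finset.sum_le_sum_of_subset_of_nonneg
            · intro w hw
              simp only [Finset.mem_filter] at hw ⊢
              exact ⟨hw.1, hw.2.trans (Nat.le_succ n)⟩
            · exact fun w _ _ => hq' w
  · rw [if_neg hzK, if_neg hzn]
    split_ifs with h2
    · exact div_nonneg (Finset.sum_nonneg fun w _ => hq' w) (by positivity)
    · exact le_refl _

lemma phiIter_nonneg (n k : ℕ) (z : V) : 0 ≤ phiIter G K o n k z := by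
  induction k generalizing z with
  | zero => exact le_refl _
  | succ k ih =>
      rw [phiIter, Function.iterate_succ_apply']
      exact stepT_nonneg (fun w => ih w) z

lemma phiIter_le_one (n k : ℕ) (z : V) : phiIter G K o n k z ≤ 1 := by
  induction k generalizing z with
  | zero => norm_num [phiIter]
  | succ k ih =>
      rw [phiIter, Function.iterate_succ_apply']
      exact stepT_le_one (fun w => ih w) z

lemma phiIter_mono_k (n : ℕ) (z : V) : Monotone fun k => phiIter G K o n k z := by
  apply monotone_nat_of_le_succ
  intro k
  induction k generalizing z with
  | zero => exact stepT_nonneg (fun _ => le_refl 0) z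
  | succ k ih =>
      rw [phiIter, phiIter, Function.iterate_succ_apply', Function.iterate_succ_apply']
      exact stepT_mono (fun w => ih w) z

lemma phiIter_bdd (n : ℕ) (z : V) : BddAbove (Set.range fun k => phiIter G K o n k z) :=
  ⟨1, by rintro y ⟨k, rfl⟩; exact phiIter_le_one n k z⟩

lemma phi_tendsto (n : ℕ) (z : V) :
    Tendsto (fun k => phiIter G K o n k z) atTop (nhds (phi G K o n z)) :=
  tendsto_atTop_ciSup (phiIter_mono_k n z) (phiIter_bdd n z)

lemma phi_nonneg (n : ℕ) (z : V) : 0 ≤ phi G K o n z :=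
  le_trans (phiIter_nonneg n 0 z) (le_ciSup (phiIter_bdd n z) 0)

lemma phi_le_one (n : ℕ) (z : V) : phi G K o n z ≤ 1 :=
  ciSup_le fun k => phiIter_le_one n k z

lemma phi_eq_one (n : ℕ) {z : V} (hz : z ∈ K) : phi G K o n z = 1 := by
  refine le_antisymm (phi_le_one n z) ?_
  have h1 : phiIter G K o n 1 z = 1 := by
    rw [phiIter, Function.iterate_one, stepT, if_pos hz]
  exact h1 ▸ le_ciSup (phiIter_bdd n z) 1


lemma phi_harm {n : ℕ} {z : V} (hzK : z ∉ K) (hzn : G.dist o z ≤ n)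
    (hd : 0 < G.degree z) :
    (G.degree z : ℝ) * phi G K o n z
      = ∑ w ∈ (G.neighborFinset z).filter (fun w => G.dist o w ≤ n), phi G K o n w := by
  have h1 : Tendsto (fun k => phiIter G K o n (k + 1) z) atTop (nhds (phi G K o n z)) :=
    (phi_tendsto n z).comp (tendsto_add_atTop_nat 1)
  have h2 : ∀ k, phiIter G K o n (k + 1) z
      = (∑ w ∈ (G.neighborFinset z).filter (fun w => G.dist o w ≤ n),
          phiIter G K o n k w) / (G.degree z) := by
    intro k
    rw [phiIter, Function.iterate_succ_apply', stepT, if_neg hzK, if_pos hzn]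
    rfl
  have h3 : Tendsto (fun k => phiIter G K o n (k + 1) z) atTop
      (nhds ((∑ w ∈ (G.neighborFinset z).filter (fun w => G.dist o w ≤ n),
        phi G K o n w) / (G.degree z))) := by
    simp only [h2]
    exact (tendsto_finset_sum _ fun w _ => phi_tendsto n w).div_const _
  have h4 := tendsto_nhds_unique h1 h3
  rw [h4]
  have hd' : (G.degree z : ℝ) ≠ 0 := by positivity
  field_simp

lemma phiIter_le_hK {hK : V → ℝ} (hK1 : ∀ z ∈ K, hK z = 1)
    (hKharm : ∀ z, z ∉ K →
      (G.degree z : ℝ) * hK z = ∑ w ∈ G.neighborFinset z, hK w)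
    (hK01 : ∀ z, 0 ≤ hK z ∧ hK z ≤ 1) (n k : ℕ) (z : V) :
    phiIter G K o n k z ≤ hK z := by
  induction k generalizing z with
  | zero => exact (hK01 z).1
  | succ k ih =>
      rw [phiIter, Function.iterate_succ_apply']
      show stepT G K o n (phiIter G K o n k) z ≤ hK z
      rw [stepT]
      split_ifs with h1 h2
      · exact (hK1 z h1).ge
      · rcases eq_or_lt_of_le (Nat.cast_nonneg (α := ℝ) (G.degree z)) with hd | hd
        · rw [← hd, div_zero]; exact (hK01 z).1
        · rw [div_le_iff₀ hd]
          calc ∑ w ∈ (G.neighborFinset z).filter (fun w => G.dist o w ≤ n),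
                  phiIter G K o n k w
              ≤ ∑ w ∈ (G.neighborFinset z).filter (fun w => G.dist o w ≤ n), hK w :=
                Finset.sum_le_sum fun w _ => ih w
            _ ≤ ∑ w ∈ G.neighborFinset z, hK w :=
                Finset.sum_le_sum_of_subset_of_nonneg (Finset.filter_subset _ _)
                  (fun w _ _ => (hK01 w).1)
            _ = (G.degree z : ℝ) * hK z := (hKharm z h1).symm
            _ = hK z * (G.degree z : ℝ) := mul_comm _ _
      · exact (hK01 z).1

lemma phi_le_hK {hK : V → ℝ} (hK1 : ∀ z ∈ K, hK z = 1)
    (hKharm : ∀ z, z ∉ K →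
      (G.degree z : ℝ) * hK z = ∑ w ∈ G.neighborFinset z, hK w)
    (hK01 : ∀ z, 0 ≤ hK z ∧ hK z ≤ 1) (n : ℕ) (z : V) :
    phi G K o n z ≤ hK z :=
  ciSup_le fun k => phiIter_le_hK hK1 hKharm hK01 n k z

lemma phi_mono_n (n : ℕ) (z : V) : phi G K o n z ≤ phi G K o (n + 1) z := by
  have hiter : ∀ k z, phiIter G K o n k z ≤ phiIter G K o (n + 1) k z := by
    intro k
    induction k with
    | zero => exact fun z => le_refl _
    | succ k ih =>
        intro z
        rw [phiIter, phiIter, Function.iterate_succ_apply', Function.iterate_succ_apply']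
        exact stepT_mono_n (fun w => ih w) (fun w => phiIter_nonneg (n + 1) k w) z
  exact ciSup_le fun k => le_trans (hiter k z) (le_ciSup (phiIter_bdd (n + 1) z) k)

noncomputable def phiLim (z : V) : ℝ := ⨆ n, phi G K o n z

lemma phiLim_tendsto (z : V) :
    Tendsto (fun n => phi G K o n z) atTop (nhds (phiLim (G := G) (K := K) (o := o) z)) :=
  tendsto_atTop_ciSup (monotone_nat_of_le_succ fun n => phi_mono_n n z)
    ⟨1, by rintro y ⟨n, rfl⟩; exact phi_le_one n z⟩

lemma ball_finite (hGconn : G.Connected) (n : ℕ) : {z : V | G.dist o z ≤ n}.Finite := by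
  induction n with
  | zero =>
      apply Set.Finite.subset (Set.finite_singleton o)
      intro z hz
      simp only [Set.mem_setOf_eq, Nat.le_zero] at hz
      have := (hGconn.dist_eq_zero_iff (u := o) (v := z)).mp hz
      simp [this]
  | succ n ih =>
      apply Set.Finite.subset
        (ih.union (ih.biUnion fun u _ => (G.neighborSet u).toFinite))
      intro z hz
      simp only [Set.mem_setOf_eq] at hz
      by_cases h : G.dist o z ≤ n
      · exact Or.inl h
      · right
        have hdist : G.dist o z = n + 1 := le_antisymm hz (Nat.succ_le_of_lt (not_le.mp h))
        have hne : G.dist o z ≠ 0 := by omega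
        obtain ⟨p, hp⟩ := (hGconn o z).exists_walk_length_eq_dist
        have hq : ¬ p.reverse.Nil := by
          rw [SimpleGraph.Walk.nil_iff_length_eq]
          rw [SimpleGraph.Walk.length_reverse, hp]
          omega
        have hadj : G.Adj z (p.reverse.getVert 1) := p.reverse.adj_snd hq
        have htail : (p.reverse.tail).length + 1 = p.reverse.length :=
          SimpleGraph.Walk.length_tail_add_one hq
        have hdu : G.dist o (p.reverse.getVert 1) ≤ n := by
          rw [SimpleGraph.dist_comm]
          have := SimpleGraph.dist_le p.reverse.tail
          have this : G.dist (p.reverse.getVert 1) o ≤ p.reverse.tail.length := this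
          rw [SimpleGraph.Walk.length_reverse, hp, hdist] at htail
          omega
        exact Set.mem_biUnion hdu hadj.symm

lemma green_sym (B : Finset V) (f g : V → ℝ) :
    ∑ u ∈ B, f u * ((G.degree u : ℝ) * g u
        - ∑ w ∈ (G.neighborFinset u).filter (· ∈ B), g w)
      = ∑ u ∈ B, g u * ((G.degree u : ℝ) * f u
        - ∑ w ∈ (G.neighborFinset u).filter (· ∈ B), f w) := by
  have hfilt : ∀ u : V, (G.neighborFinset u).filter (· ∈ B) = B.filter (G.Adj u ·) := by
    intro u
    ext w
    simp only [Finset.mem_filter, SimpleGraph.mem_neighborFinset]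
    tauto
  have key : ∀ F : V → V → ℝ,
      ∑ u ∈ B, ∑ w ∈ B.filter (G.Adj u ·), F u w
        = ∑ u ∈ B, ∑ w ∈ B.filter (G.Adj u ·), F w u := by
    intro F
    have e1 : ∀ u, ∑ w ∈ B.filter (G.Adj u ·), F u w
        = ∑ w ∈ B, if G.Adj u w then F u w else 0 := fun u => Finset.sum_filter _ _
    have e2 : ∀ u, ∑ w ∈ B.filter (G.Adj u ·), F w u
        = ∑ w ∈ B, if G.Adj u w then F w u else 0 := fun u => Finset.sum_filter _ _
    simp only [e1, e2]
    rw [Finset.sum_comm]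
    apply Finset.sum_congr rfl
    intro u _
    apply Finset.sum_congr rfl
    intro w _
    simp only [G.adj_comm u w]
  simp only [mul_sub, Finset.mul_sum, hfilt, Finset.sum_sub_distrib]
  congr 1
  · apply Finset.sum_congr rfl
    intro u _
    ring
  · have := key fun u w => f u * g w
    rw [this]
    apply Finset.sum_congr rfl
    intro u _
    apply Finset.sum_congr rfl
    intro w _
    ring

end aux

/-- Let `K` be a finite subset of a locally finite connected transient
graph `G` with root `o`, and `x ∈ K`. The equilibrium measure
`e_K(x) = d(x) · P_x[no return to K]` satisfies
`e_K(x) = lim_n c_{*_n} · P_{*_n}[X_τ = x]`, where `*_n` is obtained by contracting the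
complement of the ball `G_n` to a single vertex and `τ` is the first hitting time of
`K ∪ {*_n}`.

Encodings: `hK z = P_z[walk from z visits K at some time t ≥ 0]` is the minimal
nonnegative supersolution equal to `1` on `K` and harmonic off `K`; transience is
`∃ z, hK z < 1`; `P_x[no return to K] = 1 − Σ_{w∼x} hK w / d(x)`. On the contracted
graph, `ψ n z = P_z[walk killed on leaving the ball G_n hits K (before *_n) at x]`, and
since each edge from the ball to its complement becomes an edge at `*_n`,
`c_{*_n} · P_{*_n}[X_τ = x] = Σ_{u ∈ G_n} #{neighbours of u outside G_n} · ψ n u`,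
written below as a `tsum` (the summand vanishes outside the ball). -/
theorem stmt_10 {V : Type*} [DecidableEq V]
    (G : SimpleGraph V) [DecidableRel G.Adj] [∀ v : V, Fintype (G.neighborSet v)]
    (hGconn : G.Connected) (o : V)
    (K : Finset V) (hKne : K.Nonempty) (x : V) (hx : x ∈ K)
    (hK : V → ℝ)
    (hK1 : ∀ z ∈ K, hK z = 1)
    (hKharm : ∀ z, z ∉ K →
      (G.degree z : ℝ) * hK z = ∑ w ∈ G.neighborFinset z, hK w)
    (hK01 : ∀ z, 0 ≤ hK z ∧ hK z ≤ 1)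
    (hKmin : ∀ q : V → ℝ, (∀ z ∈ K, q z = 1) →
      (∀ z, z ∉ K → ∑ w ∈ G.neighborFinset z, q w ≤ (G.degree z : ℝ) * q z) →
      (∀ z, 0 ≤ q z) → ∀ z, hK z ≤ q z)
    (htrans : ∃ z, hK z < 1)
    (ψ : ℕ → V → ℝ)
    (hψb : ∀ n, ∀ z ∈ K, ψ n z = if z = x then 1 else 0)
    (hψharm : ∀ n, ∀ z, z ∉ K → G.dist o z ≤ n →
      (G.degree z : ℝ) * ψ n z
        = ∑ w ∈ (G.neighborFinset z).filter (fun w => G.dist o w ≤ n), ψ n w)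
    (hψ0 : ∀ n z, n < G.dist o z → ψ n z = 0) :
    Tendsto
      (fun n => ∑' u : V,
        (if G.dist o u ≤ n then
          (((G.neighborFinset u).filter (fun w => n < G.dist o w)).card : ℝ) * ψ n u
        else 0))
      atTop
      (nhds ((G.degree x : ℝ)
        * (1 - (∑ w ∈ G.neighborFinset x, hK w) / (G.degree x : ℝ)))) := by
  -- positivity of degrees
  obtain ⟨z0, hz0⟩ := htrans
  have hz0K : z0 ∉ K := fun h => absurd (hK1 z0 h) (ne_of_lt hz0)
  have hz0x : z0 ≠ x := fun h => hz0K (h ▸ hx)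
  have hdeg : ∀ v : V, 0 < G.degree v := by
    intro v
    rw [G.degree_pos_iff_exists_adj]
    have hne : ∃ u : V, u ≠ v := by
      by_cases hvx : v = x
      · exact ⟨z0, by rw [hvx]; exact hz0x⟩
      · exact ⟨x, fun h => hvx h.symm⟩
    obtain ⟨u, huv⟩ := hne
    obtain ⟨p⟩ := hGconn v u
    have hnil : ¬p.Nil := SimpleGraph.Walk.not_nil_of_ne (fun h => huv h.symm)
    exact ⟨p.getVert 1, p.adj_snd hnil⟩
  -- neighbour distance bound
  have hnbr : ∀ z w : V, G.Adj z w → G.dist o w ≤ G.dist o z + 1 := by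
    intro z w hzw
    have h1 : G.dist z w ≤ 1 := by
      have := SimpleGraph.dist_le hzw.toWalk
      simpa using this
    calc G.dist o w ≤ G.dist o z + G.dist z w := hGconn.dist_triangle
      _ ≤ G.dist o z + 1 := by omega
  -- finite balls
  have hfin : ∀ n : ℕ, {z : V | G.dist o z ≤ n}.Finite := fun n => ball_finite hGconn n
  set B : ℕ → Finset V := fun n => (hfin n).toFinset with hBdef
  have hB : ∀ n (z : V), z ∈ B n ↔ G.dist o z ≤ n := fun n z => (hfin n).mem_toFinset
  -- filter rewriting
  have hfiltB : ∀ n (u : V), (G.neighborFinset u).filter (· ∈ B n)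
      = (G.neighborFinset u).filter (fun w => G.dist o w ≤ n) :=
    fun n u => Finset.filter_congr fun w _ => hB n w
  -- phi converges to hK
  have hharmL : ∀ z, z ∉ K →
      (G.degree z : ℝ) * phiLim (G := G) (K := K) (o := o) z
        = ∑ w ∈ G.neighborFinset z, phiLim (G := G) (K := K) (o := o) w := by
    intro z hzK
    have hfull : ∀ n, G.dist o z + 1 ≤ n →
        (G.neighborFinset z).filter (fun w => G.dist o w ≤ n) = G.neighborFinset z := by
      intro n hn
      apply Finset.filter_true_of_mem
      intro w hw
      rw [SimpleGraph.mem_neighborFinset] at hw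
      exact le_trans (hnbr z w hw) hn
    have t1 : Tendsto (fun n => (G.degree z : ℝ) * phi G K o n z) atTop
        (nhds ((G.degree z : ℝ) * phiLim (G := G) (K := K) (o := o) z)) :=
      (phiLim_tendsto z).const_mul _
    have t2 : Tendsto (fun n => ∑ w ∈ G.neighborFinset z, phi G K o n w) atTop
        (nhds (∑ w ∈ G.neighborFinset z, phiLim (G := G) (K := K) (o := o) w)) :=
      tendsto_finset_sum _ fun w _ => phiLim_tendsto w
    have heq : (fun n => (G.degree z : ℝ) * phi G K o n z)
        =ᶠ[atTop] (fun n => ∑ w ∈ G.neighborFinset z, phi G K o n w) := by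
      refine eventually_atTop.mpr ⟨G.dist o z + 1, fun n hn => ?_⟩
      show (G.degree z : ℝ) * phi G K o n z = ∑ w ∈ G.neighborFinset z, phi G K o n w
      rw [phi_harm hzK (by omega) (hdeg z), hfull n hn]
    exact tendsto_nhds_unique (t1.congr' heq) t2
  have hLeq : ∀ z, phiLim (G := G) (K := K) (o := o) z = hK z := by
    have h1 : ∀ z, phiLim (G := G) (K := K) (o := o) z ≤ hK z :=
      fun z => ciSup_le fun n => phi_le_hK hK1 hKharm hK01 n z
    have h2 : ∀ z, hK z ≤ phiLim (G := G) (K := K) (o := o) z := by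
      apply hKmin
      · intro z hz
        have : ∀ n : ℕ, phi G K o n z = 1 := fun n => phi_eq_one n hz
        simp only [phiLim, this, ciSup_const]
      · intro z hz
        exact (hharmL z hz).ge
      · intro z
        have h0 : phi G K o 0 z ≤ phiLim (G := G) (K := K) (o := o) z :=
          le_ciSup (f := fun n => phi G K o n z)
            ⟨1, by rintro y ⟨n, rfl⟩; exact phi_le_one n z⟩ 0
        exact le_trans (phi_nonneg 0 z) h0
    exact fun z => le_antisymm (h1 z) (h2 z)
  have htend : ∀ w : V, Tendsto (fun n => phi G K o n w) atTop (nhds (hK w)) :=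
    fun w => (hLeq w) ▸ phiLim_tendsto w
  -- the main identity
  have hmain : ∀ n : ℕ, G.dist o x + 1 ≤ n →
      (∑' u : V, (if G.dist o u ≤ n then
          (((G.neighborFinset u).filter (fun w => n < G.dist o w)).card : ℝ) * ψ n u
        else 0))
      = (G.degree x : ℝ) - ∑ w ∈ G.neighborFinset x, phi G K o n w := by
    intro n hn
    have hxB : x ∈ B n := (hB n x).mpr (by omega)
    -- Step A : tsum to finite sum
    have hA : (∑' u : V, (if G.dist o u ≤ n then
          (((G.neighborFinset u).filter (fun w => n < G.dist o w)).card : ℝ) * ψ n u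
        else 0))
        = ∑ u ∈ B n,
            (((G.neighborFinset u).filter (fun w => n < G.dist o w)).card : ℝ) * ψ n u := by
      rw [tsum_eq_sum (s := B n) (fun u hu => if_neg (fun h => hu ((hB n u).mpr h)))]
      exact Finset.sum_congr rfl fun u hu => if_pos ((hB n u).mp hu)
    -- Step B : rewrite the card
    have hcard : ∀ u : V,
        (((G.neighborFinset u).filter (fun w => n < G.dist o w)).card : ℝ)
          = (G.degree u : ℝ) * 1
            - ∑ w ∈ (G.neighborFinset u).filter (· ∈ B n), (1 : ℝ) := by
      intro u
      rw [hfiltB n u]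
      have h2 : (G.neighborFinset u).filter (fun w => n < G.dist o w)
          = (G.neighborFinset u).filter (fun w => ¬ G.dist o w ≤ n) :=
        Finset.filter_congr fun w _ => by omega
      have h3 := Finset.card_filter_add_card_filter_not
        (s := G.neighborFinset u) (p := fun w => G.dist o w ≤ n)
      rw [Finset.sum_const, nsmul_eq_mul, mul_one, mul_one, h2]
      rw [G.card_neighborFinset_eq_degree] at h3
      have h4 : ((G.neighborFinset u).filter (fun w => ¬ G.dist o w ≤ n)).card
          = G.degree u - ((G.neighborFinset u).filter (fun w => G.dist o w ≤ n)).card := by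
        omega
      rw [h4]
      have h5 : ((G.neighborFinset u).filter (fun w => G.dist o w ≤ n)).card
          ≤ G.degree u := by omega
      push_cast [h5]
      ring
    -- bracket vanishing off K
    have hbr0 : ∀ u ∈ B n, u ∉ K →
        (G.degree u : ℝ) * ψ n u
          - ∑ w ∈ (G.neighborFinset u).filter (· ∈ B n), ψ n w = 0 := by
      intro u hu huK
      rw [hfiltB n u, ← hψharm n u huK ((hB n u).mp hu), sub_self]
    -- chain of equalities
    calc (∑' u : V, (if G.dist o u ≤ n then
          (((G.neighborFinset u).filter (fun w => n < G.dist o w)).card : ℝ) * ψ n u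
        else 0))
        = ∑ u ∈ B n,
            (((G.neighborFinset u).filter (fun w => n < G.dist o w)).card : ℝ) * ψ n u := hA
      _ = ∑ u ∈ B n, ψ n u * ((G.degree u : ℝ) * (fun _ : V => (1:ℝ)) u
            - ∑ w ∈ (G.neighborFinset u).filter (· ∈ B n), (fun _ : V => (1:ℝ)) w) := by
          refine Finset.sum_congr rfl fun u _ => ?_
          rw [hcard u]
          ring
      _ = ∑ u ∈ B n, (fun _ : V => (1:ℝ)) u * ((G.degree u : ℝ) * ψ n u
            - ∑ w ∈ (G.neighborFinset u).filter (· ∈ B n), ψ n w) :=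
          green_sym (B n) (ψ n) (fun _ => (1:ℝ))
      _ = ∑ u ∈ B n, phi G K o n u * ((G.degree u : ℝ) * ψ n u
            - ∑ w ∈ (G.neighborFinset u).filter (· ∈ B n), ψ n w) := by
          refine Finset.sum_congr rfl fun u hu => ?_
          by_cases huK : u ∈ K
          · rw [phi_eq_one n huK]
          · rw [hbr0 u hu huK, mul_zero, mul_zero]
      _ = ∑ u ∈ B n, ψ n u * ((G.degree u : ℝ) * phi G K o n u
            - ∑ w ∈ (G.neighborFinset u).filter (· ∈ B n), phi G K o n w) :=
          (green_sym (B n) (ψ n) (phi G K o n)).symm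
      _ = (G.degree x : ℝ) - ∑ w ∈ G.neighborFinset x, phi G K o n w := by
          rw [Finset.sum_eq_single_of_mem x hxB ?hzero]
          · have hfull : (G.neighborFinset x).filter (· ∈ B n) = G.neighborFinset x := by
              apply Finset.filter_true_of_mem
              intro w hw
              rw [SimpleGraph.mem_neighborFinset] at hw
              exact (hB n w).mpr (le_trans (hnbr x w hw) hn)
            rw [hψb n x hx, if_pos rfl, phi_eq_one n hx, hfull]
            ring
          case hzero =>
            intro u hu hux
            by_cases huK : u ∈ K
            · rw [hψb n u huK, if_neg hux, zero_mul]
            · rw [hfiltB n u, ← phi_harm huK ((hB n u).mp hu) (hdeg u), sub_self, mul_zero]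
  -- conclude by taking limits
  have hdx : (G.degree x : ℝ) ≠ 0 := by
    have := hdeg x
    positivity
  have htarget : (G.degree x : ℝ)
      * (1 - (∑ w ∈ G.neighborFinset x, hK w) / (G.degree x : ℝ))
      = (G.degree x : ℝ) - ∑ w ∈ G.neighborFinset x, hK w := by
    field_simp
  rw [htarget]
  have hlim : Tendsto
      (fun n => (G.degree x : ℝ) - ∑ w ∈ G.neighborFinset x, phi G K o n w) atTop
      (nhds ((G.degree x : ℝ) - ∑ w ∈ G.neighborFinset x, hK w)) :=
    tendsto_const_nhds.sub (tendsto_finset_sum _ fun w _ => htend w)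
  refine hlim.congr' ?_
  exact eventually_atTop.mpr ⟨G.dist o x + 1, fun n hn => (hmain n hn).symm⟩
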